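/- For every integer N ≥ 0 and every integer n with −N ≤ n ≤ N, the function F_{Nn} is harmonic on ℝ³ ∖ {0}: for every x ≠ 0, ∂₁²F_{Nn}(x) + ∂₂²F_{Nn}(x) + ∂₃²F_{Nn}(x) = 0. -/

import Mathlib

open Real Finset

noncomputable section

/-- `ℝ³` with the Euclidean norm. -/
abbrev E3 : Type := EuclideanSpace ℝ (Fin 3)

/-- Partial derivative `∂ᵢ` of a complex-valued function on `ℝ³`. -/
def pd (i : Fin 3) (f : E3 → ℂ) : E3 → ℂ :=
  fun x => fderiv ℝ f x (EuclideanSpace.single i 1)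

/-- The complex derivative `∂ = (1/2)(∂₁ - i∂₂)`. -/
def cd (f : E3 → ℂ) : E3 → ℂ :=
  fun x => (1 / 2 : ℂ) * (pd 0 f x - Complex.I * pd 1 f x)

/-- The complex derivative `∂̄ = (1/2)(∂₁ + i∂₂)`. -/
def cdbar (f : E3 → ℂ) : E3 → ℂ :=
  fun x => (1 / 2 : ℂ) * (pd 0 f x + Complex.I * pd 1 f x)

/-- `1/r`, the Coulomb potential centred at the origin. -/
def invr : E3 → ℂ := fun x => ((‖x‖ : ℝ) : ℂ)⁻¹

/-- `F_{Nn} = ∂̄ⁿ ∂₃^{N-n} (1/r)` for `n ≥ 0`, and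
`F_{Nn} = ∂^{-n} ∂₃^{N+n} (1/r)` for `n < 0`. -/
def Fnn (N : ℕ) (n : ℤ) : E3 → ℂ :=
  if 0 ≤ n then cdbar^[n.toNat] ((pd 2)^[((N : ℤ) - n).toNat] invr)
  else cd^[(-n).toNat] ((pd 2)^[((N : ℤ) + n).toNat] invr)


namespace FnnAux


lemma hasFDerivAt_nrm {x : E3} (hx : x ≠ 0) :
    HasFDerivAt (fun y : E3 => ‖y‖) (‖x‖⁻¹ • innerSL ℝ x) x := by
  have hr : ‖x‖ ≠ 0 := norm_ne_zero_iff.mpr hx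
  have h1 : HasFDerivAt (fun y : E3 => ‖y‖ ^ 2) (2 • innerSL ℝ x) x :=
    (hasStrictFDerivAt_norm_sq x).hasFDerivAt
  have h2 : HasDerivAt Real.sqrt (1 / (2 * Real.sqrt (‖x‖ ^ 2))) (‖x‖ ^ 2) :=
    Real.hasDerivAt_sqrt (pow_ne_zero 2 hr)
  have h3 := h2.comp_hasFDerivAt x h1
  have hfun : (Real.sqrt ∘ fun y : E3 => ‖y‖ ^ 2) = fun y : E3 => ‖y‖ := by
    funext y; simp [Function.comp, Real.sqrt_sq (norm_nonneg y)]
  rw [hfun] at h3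
  refine h3.congr_fderiv ?_
  rw [Real.sqrt_sq (norm_nonneg x)]
  ext v
  simp only [ContinuousLinearMap.smul_apply, ContinuousLinearMap.smul_apply, smul_eq_mul,
    two_smul, ContinuousLinearMap.add_apply]
  field_simp
  ring

lemma inner_single (x : E3) (i : Fin 3) : (inner ℝ x (EuclideanSpace.single i (1:ℝ)) : ℝ) = x i := by
  rw [EuclideanSpace.inner_single_right]
  simp



lemma hasFDerivAt_invr {x : E3} (hx : x ≠ 0) :
    HasFDerivAt invr
      (Complex.ofRealCLM.comp ((-(‖x‖ ^ 2)⁻¹) • (‖x‖⁻¹ • innerSL ℝ x))) x := by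
  have hr : ‖x‖ ≠ 0 := norm_ne_zero_iff.mpr hx
  have h1 := hasFDerivAt_nrm hx
  have h2 : HasDerivAt (fun t : ℝ => t⁻¹) (-(‖x‖ ^ 2)⁻¹) ‖x‖ := hasDerivAt_inv hr
  have h3 := h2.comp_hasFDerivAt x h1
  have h4 := Complex.ofRealCLM.hasFDerivAt.comp x h3
  have hfun : (⇑Complex.ofRealCLM ∘ (fun t : ℝ => t⁻¹) ∘ fun y : E3 => ‖y‖) = invr := by
    funext y; simp [invr, Function.comp]
  rwa [hfun] at h4

lemma pd_invr {x : E3} (hx : x ≠ 0) (i : Fin 3) :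
    pd i invr x = Complex.ofReal (-(x i) / ‖x‖ ^ 3) := by
  have hr : ‖x‖ ≠ 0 := norm_ne_zero_iff.mpr hx
  unfold pd
  rw [(hasFDerivAt_invr hx).fderiv]
  simp only [ContinuousLinearMap.coe_comp', Function.comp_apply,
    ContinuousLinearMap.smul_apply, innerSL_apply_apply, inner_single, smul_eq_mul,
    Complex.ofRealCLM_apply]
  norm_cast
  rw [div_eq_mul_inv]; ring_nf

def G (i : Fin 3) : E3 → ℂ := fun y => ((-(y i) / ‖y‖ ^ 3 : ℝ) : ℂ)

lemma pd_G {x : E3} (hx : x ≠ 0) (i : Fin 3) :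
    pd i (G i) x = Complex.ofReal (-(‖x‖ ^ 3)⁻¹ + 3 * (x i) ^ 2 * (‖x‖ ^ 5)⁻¹) := by
  have hr : ‖x‖ ≠ 0 := norm_ne_zero_iff.mpr hx
  have hc : HasFDerivAt (fun y : E3 => -(y i)) (-(EuclideanSpace.proj (𝕜 := ℝ) i)) x :=
    (EuclideanSpace.proj (𝕜 := ℝ) i).hasFDerivAt.neg
  have ht' : HasDerivAt (fun t : ℝ => t ^ 3) (3 * ‖x‖ ^ 2) ‖x‖ := by
    simpa using hasDerivAt_pow 3 ‖x‖
  have ht : HasDerivAt (fun t : ℝ => (t ^ 3)⁻¹)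
      (-((‖x‖ ^ 3) ^ 2)⁻¹ * (3 * ‖x‖ ^ 2)) ‖x‖ := by
    have h := (hasDerivAt_inv (pow_ne_zero 3 hr)).comp (x := ‖x‖)
      (h₂ := fun t : ℝ => t⁻¹) (h := fun t : ℝ => t ^ 3) ht'
    exact h
  have hd : HasFDerivAt (fun y : E3 => (‖y‖ ^ 3)⁻¹)
      ((-((‖x‖ ^ 3) ^ 2)⁻¹ * (3 * ‖x‖ ^ 2)) • (‖x‖⁻¹ • innerSL ℝ x)) x := by
    have := ht.comp_hasFDerivAt x (hasFDerivAt_nrm hx)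
    exact this
  have hg : HasFDerivAt (fun y : E3 => -(y i) * (‖y‖ ^ 3)⁻¹)
      ((-(x i)) • ((-((‖x‖ ^ 3) ^ 2)⁻¹ * (3 * ‖x‖ ^ 2)) • (‖x‖⁻¹ • innerSL ℝ x))
        + ((‖x‖ ^ 3)⁻¹) • (-(EuclideanSpace.proj (𝕜 := ℝ) i))) x := hc.mul hd
  have hG : HasFDerivAt (G i) (Complex.ofRealCLM.comp
      ((-(x i)) • ((-((‖x‖ ^ 3) ^ 2)⁻¹ * (3 * ‖x‖ ^ 2)) • (‖x‖⁻¹ • innerSL ℝ x))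
        + ((‖x‖ ^ 3)⁻¹) • (-(EuclideanSpace.proj (𝕜 := ℝ) i)))) x := by
    have h := Complex.ofRealCLM.hasFDerivAt.comp x hg
    have hfun : (⇑Complex.ofRealCLM ∘ fun y : E3 => -(y i) * (‖y‖ ^ 3)⁻¹) = G i := by
      funext y; simp [G, Function.comp, div_eq_mul_inv]
    rwa [hfun] at h
  unfold pd
  rw [hG.fderiv]
  have hproj : (EuclideanSpace.proj (𝕜 := ℝ) i) (EuclideanSpace.single i 1) = 1 := by
    simp
  simp only [ContinuousLinearMap.coe_comp', Function.comp_apply,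
    ContinuousLinearMap.add_apply, ContinuousLinearMap.smul_apply,
    ContinuousLinearMap.neg_apply, innerSL_apply_apply, inner_single, smul_eq_mul, hproj,
    Complex.ofRealCLM_apply]
  norm_cast
  field_simp
  push_cast
  ring

lemma sum_sq (x : E3) : x 0 ^ 2 + x 1 ^ 2 + x 2 ^ 2 = ‖x‖ ^ 2 := by
  have h := EuclideanSpace.norm_eq x
  rw [h, Real.sq_sqrt (by positivity)]
  rw [Fin.sum_univ_three]
  simp [sq_abs]

lemma laplacian_invr {x : E3} (hx : x ≠ 0) :
    pd 0 (pd 0 invr) x + pd 1 (pd 1 invr) x + pd 2 (pd 2 invr) x = 0 := by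
  have hr : ‖x‖ ≠ 0 := norm_ne_zero_iff.mpr hx
  have key : ∀ i : Fin 3, pd i (pd i invr) x =
      Complex.ofReal (-(‖x‖ ^ 3)⁻¹ + 3 * (x i) ^ 2 * (‖x‖ ^ 5)⁻¹) := by
    intro i
    have hcongr : pd i (pd i invr) x = pd i (G i) x := by
      have : pd i invr =ᶠ[nhds x] G i := by
        filter_upwards [isOpen_compl_singleton.mem_nhds (by exact hx : x ∈ ({0}ᶜ : Set E3))]
          with y hy
        exact pd_invr hy i
      show fderiv ℝ (pd i invr) x _ = fderiv ℝ (G i) x _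
      rw [this.fderiv_eq]
    rw [hcongr, pd_G hx i]
  rw [key 0, key 1, key 2]
  rw [← Complex.ofReal_add, ← Complex.ofReal_add]
  norm_cast
  have hs := sum_sq x
  field_simp
  linear_combination 3 * hs



lemma mem_s {x : E3} (hx : x ≠ 0) : x ∈ ({0}ᶜ : Set E3) := hx

lemma nhds_s {x : E3} (hx : x ≠ 0) : ({0}ᶜ : Set E3) ∈ nhds x :=
  isOpen_compl_singleton.mem_nhds hx

lemma infle : ((⊤:ℕ∞) : WithTop ℕ∞) + 1 ≤ ((⊤:ℕ∞) : WithTop ℕ∞) := by norm_num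

lemma diffAt {f : E3 → ℂ} (hf : ContDiffOn ℝ (⊤:ℕ∞) f {0}ᶜ) {x : E3} (hx : x ≠ 0) :
    DifferentiableAt ℝ f x :=
  ((hf.differentiableOn (by norm_num)).differentiableAt (nhds_s hx))

lemma pd_congr {u w : E3 → ℂ} (i : Fin 3) {x : E3} (hx : x ≠ 0)
    (h : ∀ y : E3, y ≠ 0 → u y = w y) : pd i u x = pd i w x := by
  unfold pd
  have : u =ᶠ[nhds x] w := by
    filter_upwards [nhds_s hx] with y hy using h y hy
  rw [this.fderiv_eq]

lemma pd_smooth {f : E3 → ℂ} (hf : ContDiffOn ℝ (⊤:ℕ∞) f {0}ᶜ) (i : Fin 3) :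
    ContDiffOn ℝ (⊤:ℕ∞) (pd i f) {0}ᶜ := by
  have h1 : ContDiffOn ℝ (⊤:ℕ∞) (fderiv ℝ f) {0}ᶜ :=
    hf.fderiv_of_isOpen isOpen_compl_singleton infle
  exact (ContinuousLinearMap.apply ℝ ℂ (EuclideanSpace.single i 1)).contDiff.comp_contDiffOn h1

lemma pd_comm {f : E3 → ℂ} (hf : ContDiffOn ℝ (⊤:ℕ∞) f {0}ᶜ) (i j : Fin 3) {x : E3}
    (hx : x ≠ 0) : pd i (pd j f) x = pd j (pd i f) x := by
  have hd2 : ContDiffOn ℝ (⊤:ℕ∞) (fderiv ℝ f) {0}ᶜ :=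
    hf.fderiv_of_isOpen isOpen_compl_singleton infle
  have hev : ∀ᶠ y in nhds x, HasFDerivAt f (fderiv ℝ f y) y := by
    filter_upwards [nhds_s hx] with y hy using (diffAt hf hy).hasFDerivAt
  have hx2 : HasFDerivAt (fderiv ℝ f) (fderiv ℝ (fderiv ℝ f) x) x :=
    ((hd2.differentiableOn (by norm_num)).differentiableAt (nhds_s hx)).hasFDerivAt
  have symm := second_derivative_symmetric_of_eventually hev hx2
  have key : ∀ k l : Fin 3, pd k (pd l f) x =
      fderiv ℝ (fderiv ℝ f) x (EuclideanSpace.single k 1) (EuclideanSpace.single l 1) := by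
    intro k l
    have h3 : HasFDerivAt (fun y => fderiv ℝ f y (EuclideanSpace.single l 1))
        (((fderiv ℝ f x).comp (0 : E3 →L[ℝ] E3)) +
          (fderiv ℝ (fderiv ℝ f) x).flip (EuclideanSpace.single l 1)) x :=
      hx2.clm_apply (hasFDerivAt_const _ _)
    show fderiv ℝ (fun y => fderiv ℝ f y (EuclideanSpace.single l 1)) x _ = _
    rw [h3.fderiv]
    simp
  rw [key i j, key j i, symm]

lemma pd_lin {u w : E3 → ℂ} {x : E3} (hu : DifferentiableAt ℝ u x)
    (hw : DifferentiableAt ℝ w x) (a b : ℂ) (i : Fin 3) :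
    pd i (fun y => a * u y + b * w y) x = a * pd i u x + b * pd i w x := by
  unfold pd
  rw [fderiv_fun_add ((hu.const_mul a)) ((hw.const_mul b)), fderiv_const_mul hu a,
    fderiv_const_mul hw b]
  simp

def Harm (f : E3 → ℂ) : Prop :=
  ContDiffOn ℝ (⊤:ℕ∞) f {0}ᶜ ∧ ∀ x : E3, x ≠ 0 →
    pd 0 (pd 0 f) x + pd 1 (pd 1 f) x + pd 2 (pd 2 f) x = 0

lemma harm_pd {f : E3 → ℂ} (hf : Harm f) (k : Fin 3) : Harm (pd k f) := by
  obtain ⟨hs, hl⟩ := hf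
  refine ⟨pd_smooth hs k, fun x hx => ?_⟩
  have swap : ∀ i : Fin 3, ∀ y : E3, y ≠ 0 → pd i (pd k f) y = pd k (pd i f) y :=
    fun i y hy => pd_comm hs i k hy
  have step : ∀ i : Fin 3, pd i (pd i (pd k f)) x = pd k (pd i (pd i f)) x := by
    intro i
    rw [pd_congr i hx (swap i), pd_comm (pd_smooth hs i) i k hx]
  rw [step 0, step 1, step 2]
  have hd : ∀ i : Fin 3, DifferentiableAt ℝ (pd i (pd i f)) x :=
    fun i => diffAt (pd_smooth (pd_smooth hs i) i) hx
  have lin1 : pd k (fun y => (1:ℂ) * pd 0 (pd 0 f) y + (1:ℂ) * pd 1 (pd 1 f) y) x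
      = 1 * pd k (pd 0 (pd 0 f)) x + 1 * pd k (pd 1 (pd 1 f)) x :=
    pd_lin (hd 0) (hd 1) 1 1 k
  have h01 : DifferentiableAt ℝ (fun y => (1:ℂ) * pd 0 (pd 0 f) y + (1:ℂ) * pd 1 (pd 1 f) y) x :=
    ((hd 0).const_mul 1).add ((hd 1).const_mul 1)
  have lin2 : pd k (fun y => (1:ℂ) * ((1:ℂ) * pd 0 (pd 0 f) y + (1:ℂ) * pd 1 (pd 1 f) y)
      + (1:ℂ) * pd 2 (pd 2 f) y) x
      = 1 * pd k (fun y => (1:ℂ) * pd 0 (pd 0 f) y + (1:ℂ) * pd 1 (pd 1 f) y) x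
        + 1 * pd k (pd 2 (pd 2 f)) x :=
    pd_lin h01 (hd 2) 1 1 k
  have zero_eq : pd k (fun y => (1:ℂ) * ((1:ℂ) * pd 0 (pd 0 f) y + (1:ℂ) * pd 1 (pd 1 f) y)
      + (1:ℂ) * pd 2 (pd 2 f) y) x = 0 := by
    rw [pd_congr k hx (fun y hy => by simp only [one_mul]; exact hl y hy)]
    unfold pd
    simp [fderiv_const]
  rw [lin2, lin1] at zero_eq
  linear_combination zero_eq

lemma harm_comb {u w : E3 → ℂ} (hu : Harm u) (hw : Harm w) (a b : ℂ) :
    Harm (fun y => a * u y + b * w y) := by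
  refine ⟨(contDiffOn_const.mul hu.1).add (contDiffOn_const.mul hw.1), fun x hx => ?_⟩
  have step : ∀ i : Fin 3,
      pd i (pd i (fun y => a * u y + b * w y)) x = a * pd i (pd i u) x + b * pd i (pd i w) x := by
    intro i
    rw [pd_congr i hx (fun y hy => pd_lin (diffAt hu.1 hy) (diffAt hw.1 hy) a b i)]
    exact pd_lin (diffAt (pd_smooth hu.1 i) hx) (diffAt (pd_smooth hw.1 i) hx) a b i
  rw [step 0, step 1, step 2]
  linear_combination a * hu.2 x hx + b * hw.2 x hx

lemma harm_funext {u w : E3 → ℂ} (hu : Harm u) (h : ∀ y, u y = w y) : Harm w := by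
  have : u = w := funext h
  rwa [← this]

lemma harm_cdbar {f : E3 → ℂ} (hf : Harm f) : Harm (cdbar f) := by
  refine harm_funext (harm_comb (harm_pd hf 0) (harm_pd hf 1) (1/2) ((1/2) * Complex.I)) (fun y => ?_)
  unfold _root_.cdbar
  ring

lemma harm_cd {f : E3 → ℂ} (hf : Harm f) : Harm (cd f) := by
  refine harm_funext (harm_comb (harm_pd hf 0) (harm_pd hf 1) (1/2) (-((1/2) * Complex.I))) (fun y => ?_)
  unfold _root_.cd
  ring


lemma smooth_invr : ContDiffOn ℝ (⊤:ℕ∞) invr {0}ᶜ := by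
  intro x hx
  replace hx : x ≠ 0 := hx
  have h1 : ContDiffAt ℝ (⊤:ℕ∞) (fun y : E3 => ((‖y‖ : ℝ) : ℂ)) x :=
    Complex.ofRealCLM.contDiff.contDiffAt.comp x (contDiffAt_norm ℝ hx)
  have h2 : ContDiffAt ℝ (⊤:ℕ∞) invr x := by
    have := h1.inv (by simpa using norm_ne_zero_iff.mpr hx)
    exact this
  exact h2.contDiffWithinAt

lemma harm_invr : Harm invr := ⟨smooth_invr, fun x hx => laplacian_invr hx⟩

lemma harm_pd2_iter (k : ℕ) : Harm ((pd 2)^[k] invr) := by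
  induction k with
  | zero => exact harm_invr
  | succ m ih => rw [Function.iterate_succ_apply']; exact harm_pd ih 2

lemma harm_cdbar_iter {f : E3 → ℂ} (hf : Harm f) (m : ℕ) : Harm (cdbar^[m] f) := by
  induction m with
  | zero => exact hf
  | succ k ih => rw [Function.iterate_succ_apply']; exact harm_cdbar ih

lemma harm_cd_iter {f : E3 → ℂ} (hf : Harm f) (m : ℕ) : Harm (cd^[m] f) := by
  induction m with
  | zero => exact hf
  | succ k ih => rw [Function.iterate_succ_apply']; exact harm_cd ih

lemma harm_Fnn (N : ℕ) (n : ℤ) : Harm (Fnn N n) := by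
  unfold Fnn
  split_ifs with h
  · exact harm_cdbar_iter (harm_pd2_iter _) _
  · exact harm_cd_iter (harm_pd2_iter _) _

end FnnAux

/-- Each `F_{Nn}` is harmonic on `ℝ³ \ {0}`. -/
theorem Fnn_harmonic (N : ℕ) (n : ℤ) (h1 : -(N : ℤ) ≤ n) (h2 : n ≤ (N : ℤ)) :
    ∀ x : E3, x ≠ 0 →
      pd 0 (pd 0 (Fnn N n)) x + pd 1 (pd 1 (Fnn N n)) x + pd 2 (pd 2 (Fnn N n)) x = 0 := by
  exact fun x hx => (FnnAux.harm_Fnn N n).2 x hx
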